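/- arXiv:2111.03383 — 2 statements merged into one kernel-verified Lean document; each statement's English description precedes it below -/
import Mathlib

section
/- Let p(x) = (1/Z) ∏_a ψ_a(x_a) be a factorized distribution on a finite product space, with bipartite factor graph G = (V ∪ A, E) where (i,a) ∈ E iff factor ψ_a depends on variable x_i. Let I, J, K ⊆ V be disjoint (not necessarily covering V) and suppose every path in G from a vertex of I to a vertex of K passes through a vertex of J (i.e., removing J disconnects I from K in G). Then p(x_I, x_K | x_J) = p(x_I | x_J) · p(x_K | x_J) whenever p(x_J) > 0. -/
open Finset Classical
noncomputable section

/-- The bipartite factor graph: variable vertices `Fin N`, factor vertices `A`,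
with an edge between variable `i` and factor `a` iff `i` is in the scope `S a`
of the factor. -/
def factorGraph (N : ℕ) (A : Type*) (S : A → Finset (Fin N)) :
    SimpleGraph (Fin N ⊕ A) where
  Adj v w := (∃ i a, v = Sum.inl i ∧ w = Sum.inr a ∧ i ∈ S a) ∨
             (∃ i a, v = Sum.inr a ∧ w = Sum.inl i ∧ i ∈ S a)
  symm := ⟨by rintro v w (⟨i, a, rfl, rfl, h⟩ | ⟨i, a, rfl, rfl, h⟩)
              · exact Or.inr ⟨i, a, rfl, rfl, h⟩
              · exact Or.inl ⟨i, a, rfl, rfl, h⟩⟩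
  loopless := ⟨by rintro v (⟨i, a, rfl, h, _⟩ | ⟨i, a, rfl, h, _⟩) <;> simp at h⟩

lemma factorGraph_adj_left {N : ℕ} {A : Type*} {S : A → Finset (Fin N)}
    {i : Fin N} {a : A} (h : i ∈ S a) :
    (factorGraph N A S).Adj (Sum.inl i) (Sum.inr a) :=
  Or.inl ⟨i, a, rfl, rfl, h⟩

lemma factorGraph_adj_right {N : ℕ} {A : Type*} {S : A → Finset (Fin N)}
    {i : Fin N} {a : A} (h : i ∈ S a) :
    (factorGraph N A S).Adj (Sum.inr a) (Sum.inl i) :=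
  Or.inr ⟨i, a, rfl, rfl, h⟩

/-- **Separated neighborhood lemma.**
If `I, J, K` are disjoint sets of variables (not necessarily covering all
variables) such that every path in the factor graph from `I` to `K` passes
through a vertex of `J`, then `p(x_I, x_K | x_J) = p(x_I | x_J) · p(x_K | x_J)`
whenever `p(x_J) > 0`. -/
theorem separated_neighborhood
    (N : ℕ) (X : Fin N → Type*) [∀ i, Fintype (X i)] [∀ i, Nonempty (X i)]
    (A : Type*) [Fintype A]
    (S : A → Finset (Fin N)) (ψ : A → (∀ i, X i) → ℝ)
    (hψ_nonneg : ∀ a x, 0 ≤ ψ a x)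
    (hψ_local : ∀ a x y, (∀ i ∈ S a, x i = y i) → ψ a x = ψ a y)
    (Z : ℝ) (hZ : Z = ∑ x : ∀ i, X i, ∏ a, ψ a x) (hZpos : 0 < Z)
    (p : (∀ i, X i) → ℝ) (hp : ∀ x, p x = (∏ a, ψ a x) / Z)
    (I J K : Finset (Fin N))
    (hIJ : Disjoint I J) (hIK : Disjoint I K) (hJK : Disjoint J K)
    (hsep : ∀ i ∈ I, ∀ k ∈ K,
      ∀ w : (factorGraph N A S).Walk (Sum.inl i) (Sum.inl k),
        ∃ j ∈ J, Sum.inl j ∈ w.support)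
    (marg : Finset (Fin N) → (∀ i, X i) → ℝ)
    (hmarg : ∀ T x, marg T x = ∑ y : ∀ i, X i,
      if ∀ i ∈ T, y i = x i then p y else 0)
    (x : ∀ i, X i) (hJpos : 0 < marg J x) :
    marg (I ∪ J ∪ K) x / marg J x
      = (marg (I ∪ J) x / marg J x) * (marg (K ∪ J) x / marg J x) := by
  classical
  -- `L` : variables reachable from `I` avoiding `J`
  set Lp : Fin N → Prop := fun i => i ∉ J ∧ ∃ i0 ∈ I,
    ∃ w : (factorGraph N A S).Walk (Sum.inl i0) (Sum.inl i),
      ∀ j ∈ J, Sum.inl j ∉ w.support with hLpdef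
  letI : DecidablePred Lp := fun _ => Classical.propDecidable _
  set L : Finset (Fin N) := univ.filter Lp with hLdef
  have memL : ∀ i, i ∈ L ↔ Lp i := by intro i; simp [hLdef]
  have hIL : ∀ i ∈ I, i ∈ L := by
    intro i hi
    rw [memL]
    refine ⟨fun hj => (Finset.disjoint_left.mp hIJ) hi hj,
      i, hi, SimpleGraph.Walk.nil, ?_⟩
    intro j hj hmem
    simp only [SimpleGraph.Walk.support_nil, List.mem_singleton,
      Sum.inl.injEq] at hmem
    exact (Finset.disjoint_left.mp hIJ) hi (hmem ▸ hj)
  have hJL : ∀ j ∈ J, j ∉ L := by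
    intro j hj hjL
    exact ((memL j).mp hjL).1 hj
  have hKL : ∀ k ∈ K, k ∉ L := by
    intro k hk hkL
    obtain ⟨-, i0, hi0, w, hw⟩ := (memL k).mp hkL
    obtain ⟨j, hj, hjs⟩ := hsep i0 hi0 k hk w
    exact hw j hj hjs
  have hext : ∀ a : A, ∀ i ∈ S a, i ∈ L → ∀ i' ∈ S a, i' ∉ J → i' ∈ L := by
    intro a i hiS hiL i' hi'S hi'J
    rw [memL] at hiL ⊢
    obtain ⟨hiJ, i0, hi0, w, hw⟩ := hiL
    refine ⟨hi'J, i0, hi0,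
      w.append (SimpleGraph.Walk.cons (factorGraph_adj_left hiS)
        (SimpleGraph.Walk.cons (factorGraph_adj_right hi'S)
          SimpleGraph.Walk.nil)), ?_⟩
    intro j hj hmem
    rw [SimpleGraph.Walk.support_append] at hmem
    rcases List.mem_append.mp hmem with h | h
    · exact hw j hj h
    · simp only [SimpleGraph.Walk.support_cons, SimpleGraph.Walk.support_nil,
        List.tail_cons, List.mem_cons, List.mem_singleton,
        List.not_mem_nil] at h
      rcases h with h | h | h
      · exact Sum.inl_ne_inr h
      · exact hi'J (Sum.inl.inj h ▸ hj)
      · exact h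
  -- split the factors
  set f : (∀ i, X i) → ℝ :=
    fun y => ∏ a ∈ univ.filter (fun a => ∃ i ∈ S a, i ∈ L), ψ a y with hfdef
  set g : (∀ i, X i) → ℝ :=
    fun y => ∏ a ∈ univ.filter (fun a => ¬ ∃ i ∈ S a, i ∈ L), ψ a y with hgdef
  have hfg : ∀ y, ∏ a, ψ a y = f y * g y := by
    intro y
    exact (Finset.prod_filter_mul_prod_filter_not univ _ _).symm
  have hf_nonneg : ∀ y, 0 ≤ f y := fun y =>
    Finset.prod_nonneg fun a _ => hψ_nonneg a y
  have hg_nonneg : ∀ y, 0 ≤ g y := fun y =>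
    Finset.prod_nonneg fun a _ => hψ_nonneg a y
  have hf_loc : ∀ y z : ∀ i, X i,
      (∀ i, i ∈ L ∨ i ∈ J → y i = z i) → f y = f z := by
    intro y z hyz
    refine Finset.prod_congr rfl fun a ha => ?_
    obtain ⟨i, hiS, hiL⟩ := (Finset.mem_filter.mp ha).2
    refine hψ_local a y z fun i' hi' => ?_
    by_cases hJ : i' ∈ J
    · exact hyz i' (Or.inr hJ)
    · exact hyz i' (Or.inl (hext a i hiS hiL i' hi' hJ))
  have hg_loc : ∀ y z : ∀ i, X i,
      (∀ i, i ∉ L → y i = z i) → g y = g z := by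
    intro y z hyz
    refine Finset.prod_congr rfl fun a ha => ?_
    have hna := (Finset.mem_filter.mp ha).2
    push_neg at hna
    exact hψ_local a y z fun i' hi' => hyz i' (hna i' hi')
  -- the splitting equivalence
  set e := Equiv.piEquivPiSubtypeProd (fun i => i ∈ L) X with hedef
  set xL : ∀ i : {i // i ∈ L}, X i := fun i => x i with hxLdef
  set xR : ∀ i : {i // ¬ i ∈ L}, X i := fun i => x i with hxRdef
  set m : (∀ i : {i // i ∈ L}, X i) → (∀ i : {i // ¬ i ∈ L}, X i) → ∀ i, X i :=
    fun u v => e.symm (u, v) with hmdef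
  have hm : ∀ u v i, m u v i = if h : i ∈ L then u ⟨i, h⟩ else v ⟨i, h⟩ := by
    intro u v i
    simp [hmdef, hedef, Equiv.piEquivPiSubtypeProd_symm_apply]
  -- key factorization of constrained sums
  have key : ∀ T : Finset (Fin N), J ⊆ T →
      (∑ y : ∀ i, X i, if ∀ i ∈ T, y i = x i then ∏ a, ψ a y else 0)
      = (∑ u : ∀ i : {i // i ∈ L}, X i,
          if ∀ i ∈ T, ∀ h : i ∈ L, u ⟨i, h⟩ = x i then f (m u xR) else 0)
        * (∑ v : ∀ i : {i // ¬ i ∈ L}, X i,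
          if ∀ i ∈ T, ∀ h : i ∉ L, v ⟨i, h⟩ = x i then g (m xL v) else 0) := by
    intro T hJT
    rw [Finset.sum_mul_sum]
    rw [← Equiv.sum_comp e.symm
      (fun y => if ∀ i ∈ T, y i = x i then ∏ a, ψ a y else 0)]
    rw [Fintype.sum_prod_type]
    refine Finset.sum_congr rfl fun u _ => Finset.sum_congr rfl fun v _ => ?_
    have hmy : e.symm (u, v) = m u v := rfl
    rw [hmy]
    by_cases hCL : ∀ i ∈ T, ∀ h : i ∈ L, u ⟨i, h⟩ = x i
    · by_cases hCR : ∀ i ∈ T, ∀ h : i ∉ L, v ⟨i, h⟩ = x i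
      · have hcond : ∀ i ∈ T, m u v i = x i := by
          intro i hi
          rw [hm]
          by_cases h : i ∈ L
          · rw [dif_pos h]; exact hCL i hi h
          · rw [dif_neg h]; exact hCR i hi h
        rw [if_pos hcond, if_pos hCL, if_pos hCR, hfg]
        congr 1
        · refine hf_loc _ _ fun i hi => ?_
          rw [hm, hm]
          rcases hi with h | h
          · rw [dif_pos h, dif_pos h]
          · have hnL : i ∉ L := hJL i h
            rw [dif_neg hnL, dif_neg hnL]
            exact hCR i (hJT h) hnL
        · refine hg_loc _ _ fun i hi => ?_
          rw [hm, hm, dif_neg hi, dif_neg hi]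
      · have hcond : ¬ ∀ i ∈ T, m u v i = x i := by
          intro hcond
          refine hCR fun i hi h => ?_
          have := hcond i hi
          rwa [hm, dif_neg h] at this
        rw [if_neg hcond, if_neg hCR, mul_zero]
    · have hcond : ¬ ∀ i ∈ T, m u v i = x i := by
        intro hcond
        refine hCL fun i hi h => ?_
        have := hcond i hi
        rwa [hm, dif_pos h] at this
      rw [if_neg hcond, if_neg hCL, zero_mul]
  -- marginals in terms of the unnormalized sums
  have hS : ∀ T : Finset (Fin N), marg T x =
      (∑ y : ∀ i, X i, if ∀ i ∈ T, y i = x i then ∏ a, ψ a y else 0) / Z := by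
    intro T
    rw [hmarg, Finset.sum_div]
    refine Finset.sum_congr rfl fun y _ => ?_
    by_cases h : ∀ i ∈ T, y i = x i
    · rw [if_pos h, if_pos h, hp]
    · rw [if_neg h, if_neg h, zero_div]
  -- the four sums
  set A : ℝ := ∑ u : ∀ i : {i // i ∈ L}, X i,
    if ∀ i ∈ I ∪ J, ∀ h : i ∈ L, u ⟨i, h⟩ = x i then f (m u xR) else 0
    with hAdef
  set A' : ℝ := ∑ u : ∀ i : {i // i ∈ L}, X i,
    if ∀ i ∈ J, ∀ h : i ∈ L, u ⟨i, h⟩ = x i then f (m u xR) else 0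
    with hA'def
  set B : ℝ := ∑ v : ∀ i : {i // ¬ i ∈ L}, X i,
    if ∀ i ∈ K ∪ J, ∀ h : i ∉ L, v ⟨i, h⟩ = x i then g (m xL v) else 0
    with hBdef
  set B' : ℝ := ∑ v : ∀ i : {i // ¬ i ∈ L}, X i,
    if ∀ i ∈ J, ∀ h : i ∉ L, v ⟨i, h⟩ = x i then g (m xL v) else 0
    with hB'def
  have hJIJK : J ⊆ I ∪ J ∪ K :=
    Finset.subset_union_right.trans Finset.subset_union_left
  -- condition equivalences
  have hCL_IJK : ∀ u : ∀ i : {i // i ∈ L}, X i,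
      (∀ i ∈ I ∪ J ∪ K, ∀ h : i ∈ L, u ⟨i, h⟩ = x i)
      ↔ (∀ i ∈ I ∪ J, ∀ h : i ∈ L, u ⟨i, h⟩ = x i) := by
    intro u
    constructor
    · intro H i hi h
      exact H i (Finset.mem_union_left _ hi) h
    · intro H i hi h
      rcases Finset.mem_union.mp hi with hi' | hi'
      · exact H i hi' h
      · exact absurd h (hKL i hi')
  have hCR_IJK : ∀ v : ∀ i : {i // ¬ i ∈ L}, X i,
      (∀ i ∈ I ∪ J ∪ K, ∀ h : i ∉ L, v ⟨i, h⟩ = x i)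
      ↔ (∀ i ∈ K ∪ J, ∀ h : i ∉ L, v ⟨i, h⟩ = x i) := by
    intro v
    constructor
    · intro H i hi h
      refine H i ?_ h
      rcases Finset.mem_union.mp hi with hi' | hi'
      · exact Finset.mem_union_right _ hi'
      · exact Finset.mem_union_left _ (Finset.mem_union_right _ hi')
    · intro H i hi h
      rcases Finset.mem_union.mp hi with hi' | hi'
      · rcases Finset.mem_union.mp hi' with hi'' | hi''
        · exact absurd (hIL i hi'') h
        · exact H i (Finset.mem_union_right _ hi'') h
      · exact H i (Finset.mem_union_left _ hi') h
  have hCL_KJ : ∀ u : ∀ i : {i // i ∈ L}, X i,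
      (∀ i ∈ K ∪ J, ∀ h : i ∈ L, u ⟨i, h⟩ = x i)
      ↔ (∀ i ∈ J, ∀ h : i ∈ L, u ⟨i, h⟩ = x i) := by
    intro u
    constructor
    · intro H i hi h
      exact H i (Finset.mem_union_right _ hi) h
    · intro H i hi h
      rcases Finset.mem_union.mp hi with hi' | hi'
      · exact absurd h (hKL i hi')
      · exact H i hi' h
  have hCR_IJ : ∀ v : ∀ i : {i // ¬ i ∈ L}, X i,
      (∀ i ∈ I ∪ J, ∀ h : i ∉ L, v ⟨i, h⟩ = x i)
      ↔ (∀ i ∈ J, ∀ h : i ∉ L, v ⟨i, h⟩ = x i) := by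
    intro v
    constructor
    · intro H i hi h
      exact H i (Finset.mem_union_right _ hi) h
    · intro H i hi h
      rcases Finset.mem_union.mp hi with hi' | hi'
      · exact absurd (hIL i hi') h
      · exact H i hi' h
  -- the four identities
  have h1 : (∑ y : ∀ i, X i,
      if ∀ i ∈ I ∪ J ∪ K, y i = x i then ∏ a, ψ a y else 0) = A * B := by
    rw [key _ hJIJK, hAdef, hBdef]
    congr 1
    · exact Finset.sum_congr rfl fun u _ => if_congr (hCL_IJK u) rfl rfl
    · exact Finset.sum_congr rfl fun v _ => if_congr (hCR_IJK v) rfl rfl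
  have h2 : (∑ y : ∀ i, X i,
      if ∀ i ∈ I ∪ J, y i = x i then ∏ a, ψ a y else 0) = A * B' := by
    rw [key _ Finset.subset_union_right, hAdef, hB'def]
    congr 1
    exact Finset.sum_congr rfl fun v _ => if_congr (hCR_IJ v) rfl rfl
  have h3 : (∑ y : ∀ i, X i,
      if ∀ i ∈ K ∪ J, y i = x i then ∏ a, ψ a y else 0) = A' * B := by
    rw [key _ Finset.subset_union_right, hA'def, hBdef]
    congr 1
    exact Finset.sum_congr rfl fun u _ => if_congr (hCL_KJ u) rfl rfl
  have h4 : (∑ y : ∀ i, X i,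
      if ∀ i ∈ J, y i = x i then ∏ a, ψ a y else 0) = A' * B' := by
    rw [key _ (Finset.Subset.refl J), hA'def, hB'def]
  -- positivity
  have hmargJ : marg J x = A' * B' / Z := by rw [hS J, h4]
  have hA'B'pos : 0 < A' * B' := by
    have h := hJpos
    rw [hmargJ] at h
    have h2 := mul_pos h hZpos
    rwa [div_mul_cancel₀ _ (ne_of_gt hZpos)] at h2
  have hA'ne : A' ≠ 0 := by
    intro h
    rw [h, zero_mul] at hA'B'pos
    exact lt_irrefl _ hA'B'pos
  have hB'ne : B' ≠ 0 := by
    intro h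
    rw [h, mul_zero] at hA'B'pos
    exact lt_irrefl _ hA'B'pos
  -- conclude
  rw [hS (I ∪ J ∪ K), hS (I ∪ J), hS (K ∪ J), hmargJ, h1, h2, h3]
  field_simp
end
end

section
/- If the contact graph on individuals {1,...,N} is acyclic (a forest) and the indices are a topological ordering (each node appears after all its neighbors on the path toward the root of its tree component), and the posterior distribution factorizes as P(x) ∝ ∏_i Ψ_i(x_i, x_{∂i}) with each factor Ψ_i depending only on node i and its graph neighbors ∂i, then each autoregressive conditional satisfies P(x_i | x_1, ..., x_{i-1}) = P(x_i | {x_j : j < i, dist(i,j) ≤ 2}), i.e., it depends only on nearest and next-nearest neighbors of i in the contact graph with smaller index. -/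
open Finset Classical
noncomputable section

namespace NNN

variable {N : ℕ} (G : SimpleGraph (Fin N)) (i : Fin N)

/-- within distance 2 -/
def near2 (a b : Fin N) : Prop := a = b ∨ G.Adj a b ∨ ∃ m, G.Adj a m ∧ G.Adj m b

lemma near2_iff (a b : Fin N) : near2 G a b ↔ ∃ w : G.Walk a b, w.length ≤ 2 := by
  constructor
  · rintro (rfl | h | ⟨m, h1, h2⟩)
    · exact ⟨.nil, by simp⟩
    · exact ⟨.cons h .nil, by simp⟩
    · exact ⟨.cons h1 (.cons h2 .nil), by simp⟩
  · rintro ⟨w, hw⟩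
    cases w with
    | nil => exact Or.inl rfl
    | cons h p =>
      cases p with
      | nil => exact Or.inr (Or.inl h)
      | @cons _ c _ h' p' =>
        have h0 : p'.length = 0 := by
          simp only [SimpleGraph.Walk.length_cons] at hw; omega
        have he := SimpleGraph.Walk.eq_of_length_eq_zero h0
        exact Or.inr (Or.inr ⟨_, h, he ▸ h'⟩)

/-- step relation for the component of `i` -/
def CS (a b : Fin N) : Prop := i ≤ b ∧ near2 G a b

/-- the component of `i` among vertices `≥ i` with steps of distance ≤ 2 -/
def InC (v : Fin N) : Prop := Relation.ReflTransGen (CS G i) i v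

/-- step toward the root, staying `≥ i` -/
def Par (a b : Fin N) : Prop := G.Adj a b ∧ b < a ∧ i ≤ b

def GoodEnd (t : Fin N) : Prop := i ≤ t ∧ (t = i ∨ ∃ q, G.Adj t q ∧ q < i ∧ G.Adj i q)

def Q (v : Fin N) : Prop :=
  i ≤ v ∧ ∃ t, Relation.ReflTransGen (Par G i) v t ∧ GoodEnd G i t

variable {G i}

section
variable (huniq : ∀ a b c : Fin N, G.Adj a b → b < a → G.Adj a c → c < a → b = c)
include huniq

lemma chain_adj {v t j : Fin N} (hch : Relation.ReflTransGen (Par G i) v t)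
    (hend : GoodEnd G i t) (hj : j < i) (hadj : G.Adj v j) : near2 G i j := by
  rcases hch.cases_head with rfl | ⟨w, ⟨ha2, hlt, hge⟩, _⟩
  · rcases hend with ⟨hit, rfl | ⟨q, hq1, hq2, hq3⟩⟩
    · exact Or.inr (Or.inl hadj)
    · have hq := huniq v j q hadj (lt_of_lt_of_le hj hit) hq1 (lt_of_lt_of_le hq2 hit)
      rw [← hq] at hq3
      exact Or.inr (Or.inl hq3)
  · have hjw := huniq v j w hadj (lt_trans (lt_of_lt_of_le hj hge) hlt) ha2 hlt
    rw [← hjw] at hge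
    exact absurd hge (not_le.mpr hj)

lemma Qnear {v j : Fin N} (hQ : Q G i v) (hj : j < i) (hn : near2 G v j) :
    near2 G i j := by
  obtain ⟨hiv, t, hch, hend⟩ := hQ
  rcases hn with rfl | hadj | ⟨m, h1, h2⟩
  · exact absurd hiv (not_le.mpr hj)
  · exact chain_adj huniq hch hend hj hadj
  · rcases lt_trichotomy m v with hmv | rfl | hvm
    · rcases hch.cases_head with rfl | ⟨w, ⟨ha2, hlt, hge⟩, hch'⟩
      · rcases hend with ⟨hit, rfl | ⟨q, hq1, hq2, hq3⟩⟩
        · exact Or.inr (Or.inr ⟨m, h1, h2⟩)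
        · have hq := huniq v m q h1 hmv hq1 (lt_of_lt_of_le hq2 hit)
          rw [← hq] at hq3
          exact Or.inr (Or.inr ⟨m, hq3, h2⟩)
      · have hm := huniq v m w h1 hmv ha2 hlt
        subst hm
        exact chain_adj huniq hch' hend hj h2
    · exact absurd h1 (G.loopless.irrefl _)
    · have hjv := huniq m j v h2 (lt_trans (lt_of_lt_of_le hj hiv) hvm) h1.symm hvm
      rw [← hjv] at hiv
      exact absurd hiv (not_le.mpr hj)

lemma QstepAdj {u v : Fin N} (hQ : Q G i u) (hiv : i ≤ v) (hadj : G.Adj u v) :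
    Q G i v := by
  obtain ⟨hiu, t, hch, hend⟩ := hQ
  rcases lt_trichotomy u v with huv | rfl | hvu
  · exact ⟨hiv, t, Relation.ReflTransGen.head ⟨hadj.symm, huv, hiu⟩ hch, hend⟩
  · exact absurd hadj (G.loopless.irrefl u)
  · rcases hch.cases_head with rfl | ⟨w, ⟨ha2, hlt, hge⟩, hch'⟩
    · rcases hend with ⟨hit, rfl | ⟨q, hq1, hq2, hq3⟩⟩
      · exact absurd (lt_of_lt_of_le hvu hiv) (lt_irrefl _)
      · have hv := huniq u v q hadj hvu hq1 (lt_of_lt_of_le hq2 hit)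
        rw [hv] at hiv
        exact absurd hiv (not_le.mpr hq2)
    · have hv := huniq u v w hadj hvu ha2 hlt
      subst hv
      exact ⟨hiv, t, hch', hend⟩

lemma Qstep {u v : Fin N} (hQ : Q G i u) (hiv : i ≤ v) (hn : near2 G u v) :
    Q G i v := by
  rcases hn with rfl | hadj | ⟨m, h1, h2⟩
  · exact hQ
  · exact QstepAdj huniq hQ hiv hadj
  · by_cases hvi : v = i
    · subst hvi
      exact ⟨le_rfl, v, Relation.ReflTransGen.refl, le_rfl, Or.inl rfl⟩
    have hivlt : i < v := lt_of_le_of_ne hiv (Ne.symm hvi)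
    rcases lt_trichotomy m v with hmv | rfl | hvm
    · -- m < v
      rcases lt_trichotomy m i with hmi | rfl | him
      · -- m < i
        obtain ⟨hiu, t, hch, hend⟩ := hQ
        rcases hch.cases_head with rfl | ⟨w, ⟨ha2, hlt, hge⟩, _⟩
        · rcases hend with ⟨hit, rfl | ⟨q, hq1, hq2, hq3⟩⟩
          · exact ⟨hiv, v, Relation.ReflTransGen.refl, hiv, Or.inr ⟨m, h2.symm, hmi, h1⟩⟩
          · have hm := huniq u m q h1 (lt_of_lt_of_le hmi hiu) hq1 (lt_of_lt_of_le hq2 hiu)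
            rw [← hm] at hq3
            exact ⟨hiv, v, Relation.ReflTransGen.refl, hiv, Or.inr ⟨m, h2.symm, hmi, hq3⟩⟩
        · have hm := huniq u m w h1 (lt_of_lt_of_le hmi hiu) ha2 hlt
          rw [← hm] at hge
          exact absurd hge (not_le.mpr hmi)
      · -- m = i
        exact ⟨hiv, _, Relation.ReflTransGen.single ⟨h2.symm, hivlt, le_rfl⟩, le_rfl, Or.inl rfl⟩
      · -- i < m
        have hQm : Q G i m := by
          rcases lt_trichotomy u m with hum | rfl | hmu
          · exact QstepAdj huniq hQ him.le h1
          · exact absurd h1 (G.loopless.irrefl u)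
          · obtain ⟨hiu, t, hch, hend⟩ := hQ
            rcases hch.cases_head with rfl | ⟨w, ⟨ha2, hlt, hge⟩, hch'⟩
            · rcases hend with ⟨hit, rfl | ⟨q, hq1, hq2, hq3⟩⟩
              · exact absurd (lt_trans him hmu) (lt_irrefl _)
              · have hm := huniq u m q h1 hmu hq1 (lt_of_lt_of_le hq2 hiu)
                rw [hm] at him
                exact absurd him (not_lt.mpr hq2.le)
            · have hm := huniq u m w h1 hmu ha2 hlt
              subst hm
              exact ⟨him.le, t, hch', hend⟩
        exact QstepAdj huniq hQm hiv h2
    · exact absurd h2 (G.loopless.irrefl _)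
    · -- v < m
      have him2 : i < m := lt_of_le_of_lt hiv hvm
      rcases lt_trichotomy u m with hum | rfl | hmu
      · have huv := huniq m u v h1.symm hum h2 hvm
        exact huv ▸ hQ
      · exact absurd h1 (G.loopless.irrefl u)
      · obtain ⟨hiu, t, hch, hend⟩ := hQ
        rcases hch.cases_head with rfl | ⟨w, ⟨ha2, hlt, hge⟩, hch'⟩
        · rcases hend with ⟨hit, rfl | ⟨q, hq1, hq2, hq3⟩⟩
          · exact absurd (lt_trans him2 hmu) (lt_irrefl _)
          · have hm := huniq u m q h1 hmu hq1 (lt_of_lt_of_le hq2 hiu)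
            rw [hm] at him2
            exact absurd him2 (not_lt.mpr hq2.le)
        · have hm := huniq u m w h1 hmu ha2 hlt
          subst hm
          exact QstepAdj huniq ⟨him2.le, t, hch', hend⟩ hiv h2

lemma QofC {v : Fin N} (h : InC G i v) : Q G i v := by
  induction h with
  | refl => exact ⟨le_refl i, i, Relation.ReflTransGen.refl, le_refl i, Or.inl rfl⟩
  | tail _ hbc ih => exact Qstep huniq ih hbc.1 hbc.2

end

variable (G i)

/-- merge two configurations along the component of `i` -/
def merge {X : Fin N → Type*} (y z : ∀ k, X k) : ∀ k, X k :=
  fun j => @ite _ (InC G i j) (Classical.propDecidable _) (y j) (z j)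

lemma merge_pos {X : Fin N → Type*} (y z : ∀ k, X k) {j : Fin N} (h : InC G i j) :
    merge G i y z j = y j := by simp [merge, h]

lemma merge_neg {X : Fin N → Type*} (y z : ∀ k, X k) {j : Fin N} (h : ¬ InC G i j) :
    merge G i y z j = z j := by simp [merge, h]

end NNN
/-- **Next-nearest-neighbor conditionals on acyclic contact graphs.**
If the contact graph `G` on individuals `Fin N` is acyclic, the indices are a
topological ordering (each node has at most one neighbor with smaller index,
its parent toward the root), and the posterior factorizes as
`P x ∝ ∏ i, Ψ i x` with `Ψ i` depending only on `x_i` and `{x_j : j ∈ ∂i}`,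
then each autoregressive conditional satisfies
`P(x_i | x_1, …, x_{i-1}) = P(x_i | {x_j : j < i, dist(i,j) ≤ 2})`. -/
theorem acyclic_contact_graph_next_nearest_neighbors
    (N : ℕ) (X : Fin N → Type*) [∀ i, Fintype (X i)] [∀ i, Nonempty (X i)]
    (G : SimpleGraph (Fin N))
    (hacyclic : G.IsAcyclic)
    (htopo : ∀ i : Fin N,
      (Finset.univ.filter (fun j => G.Adj i j ∧ j < i)).card ≤ 1)
    (Ψ : Fin N → (∀ i, X i) → ℝ)
    (hΨ_nonneg : ∀ i x, 0 ≤ Ψ i x)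
    (hΨ_local : ∀ i x y, (∀ j, (j = i ∨ G.Adj i j) → x j = y j) → Ψ i x = Ψ i y)
    (Z : ℝ) (hZ : Z = ∑ x : ∀ i, X i, ∏ i, Ψ i x) (hZpos : 0 < Z)
    (P : (∀ i, X i) → ℝ) (hP : ∀ x, P x = (∏ i, Ψ i x) / Z)
    (marg : Finset (Fin N) → (∀ i, X i) → ℝ)
    (hmarg : ∀ T x, marg T x = ∑ y : ∀ i, X i,
      if ∀ i ∈ T, y i = x i then P y else 0)
    (i : Fin N)
    (B : Finset (Fin N))
    (hB : B = Finset.univ.filter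
      (fun j => j < i ∧ ∃ w : G.Walk i j, w.length ≤ 2))
    (x : ∀ i, X i)
    (hpos : 0 < marg (Finset.univ.filter (· < i)) x) :
    marg (insert i (Finset.univ.filter (· < i))) x
        / marg (Finset.univ.filter (· < i)) x
      = marg (insert i B) x / marg B x := by
  classical
  set A : Finset (Fin N) := Finset.univ.filter (· < i) with hA
  have hAmem : ∀ j : Fin N, j ∈ A ↔ j < i := by
    intro j; rw [hA, Finset.mem_filter]; simp
  have huniq : ∀ a b c : Fin N, G.Adj a b → b < a → G.Adj a c → c < a → b = c := by
    intro a b c hab hb hac hc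
    exact Finset.card_le_one.mp (htopo a) b
      (Finset.mem_filter.mpr ⟨Finset.mem_univ _, hab, hb⟩) c
      (Finset.mem_filter.mpr ⟨Finset.mem_univ _, hac, hc⟩)
  have hBmem : ∀ j : Fin N, j ∈ B ↔ j < i ∧ NNN.near2 G i j := by
    intro j
    rw [hB, Finset.mem_filter]
    simp only [Finset.mem_univ, true_and]
    constructor
    · rintro ⟨h1, h2⟩; exact ⟨h1, (NNN.near2_iff G i j).mpr h2⟩
    · rintro ⟨h1, h2⟩; exact ⟨h1, (NNN.near2_iff G i j).mp h2⟩
  have hBA : B ⊆ A := by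
    intro j hj
    exact (hAmem j).mpr ((hBmem j).mp hj).1
  -- basic facts about the component of i
  have hiC : NNN.InC G i i := Relation.ReflTransGen.refl
  have hCge : ∀ j : Fin N, NNN.InC G i j → i ≤ j := fun j h => (NNN.QofC huniq h).1
  have hnotC : ∀ j : Fin N, j < i → ¬ NNN.InC G i j := by
    intro j hj hC
    exact absurd (hCge j hC) (not_le.mpr hj)
  -- nonnegativity and positivity of marginals
  have hPnn : ∀ y, 0 ≤ P y := by
    intro y
    rw [hP]
    exact div_nonneg (Finset.prod_nonneg fun k _ => hΨ_nonneg k y) hZpos.le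
  have hAB : marg A x ≤ marg B x := by
    rw [hmarg, hmarg]
    refine Finset.sum_le_sum fun y _ => ?_
    by_cases hc : ∀ j ∈ A, y j = x j
    · rw [if_pos hc, if_pos fun j hj => hc j (hBA hj)]
    · rw [if_neg hc]
      by_cases hc2 : ∀ j ∈ B, y j = x j
      · rw [if_pos hc2]; exact hPnn y
      · rw [if_neg hc2]
  have hBpos : 0 < marg B x := lt_of_lt_of_le hpos hAB
  -- the merge map and its properties
  set μ : (∀ k, X k) → (∀ k, X k) → (∀ k, X k) := NNN.merge G i with hμ
  have hμpos : ∀ (y z : ∀ k, X k) (j : Fin N), NNN.InC G i j → μ y z j = y j :=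
    fun y z j h => NNN.merge_pos G i y z h
  have hμneg : ∀ (y z : ∀ k, X k) (j : Fin N), ¬ NNN.InC G i j → μ y z j = z j :=
    fun y z j h => NNN.merge_neg G i y z h
  -- scope separation lemma
  have hscope : ∀ (k v j : Fin N), (v = k ∨ G.Adj k v) → NNN.InC G i v →
      (j = k ∨ G.Adj k j) → (j < i → j ∈ B) ∧ (i ≤ j → NNN.InC G i j) := by
    intro k v j hv hvC hj
    have hn : NNN.near2 G v j := by
      rcases hv with rfl | hv
      · rcases hj with rfl | hj
        · exact Or.inl rfl
        · exact Or.inr (Or.inl hj)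
      · rcases hj with rfl | hj
        · exact Or.inr (Or.inl hv.symm)
        · exact Or.inr (Or.inr ⟨k, hv.symm, hj⟩)
    constructor
    · intro hji
      exact (hBmem j).mpr ⟨hji, NNN.Qnear huniq (NNN.QofC huniq hvC) hji hn⟩
    · intro hij
      exact hvC.tail ⟨hij, hn⟩
  -- per-factor swap identity
  have hfac : ∀ y z : (∀ k, X k), (∀ j ∈ B, y j = z j) →
      ∀ k, Ψ k (μ y z) * Ψ k (μ z y) = Ψ k y * Ψ k z := by
    intro y z hyz k
    by_cases hC : ∃ v, (v = k ∨ G.Adj k v) ∧ NNN.InC G i v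
    · obtain ⟨v, hv, hvC⟩ := hC
      have h1 : Ψ k (μ y z) = Ψ k y := by
        refine hΨ_local k _ _ fun j hj => ?_
        by_cases hjC : NNN.InC G i j
        · exact hμpos y z j hjC
        · have hji : j < i := by
            by_contra h
            exact hjC ((hscope k v j hv hvC hj).2 (not_lt.mp h))
          rw [hμneg y z j hjC]
          exact (hyz j ((hscope k v j hv hvC hj).1 hji)).symm
      have h2 : Ψ k (μ z y) = Ψ k z := by
        refine hΨ_local k _ _ fun j hj => ?_
        by_cases hjC : NNN.InC G i j
        · exact hμpos z y j hjC
        · have hji : j < i := by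
            by_contra h
            exact hjC ((hscope k v j hv hvC hj).2 (not_lt.mp h))
          rw [hμneg z y j hjC]
          exact hyz j ((hscope k v j hv hvC hj).1 hji)
      rw [h1, h2]
    · push_neg at hC
      have h1 : Ψ k (μ y z) = Ψ k z :=
        hΨ_local k _ _ fun j hj => hμneg y z j (hC j hj)
      have h2 : Ψ k (μ z y) = Ψ k y :=
        hΨ_local k _ _ fun j hj => hμneg z y j (hC j hj)
      rw [h1, h2, mul_comm]
  have hWswap : ∀ y z : (∀ k, X k), (∀ j ∈ B, y j = z j) →
      (∏ k, Ψ k (μ y z)) * (∏ k, Ψ k (μ z y)) = (∏ k, Ψ k y) * (∏ k, Ψ k z) := by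
    intro y z hyz
    rw [← Finset.prod_mul_distrib, ← Finset.prod_mul_distrib]
    exact Finset.prod_congr rfl fun k _ => hfac y z hyz k
  -- the involution
  set φ : ((∀ k, X k) × (∀ k, X k)) → ((∀ k, X k) × (∀ k, X k)) :=
    fun p => (μ p.1 p.2, μ p.2 p.1) with hφ
  have hinv : Function.Involutive φ := by
    intro p
    simp only [hφ]
    refine Prod.ext ?_ ?_ <;> funext j <;>
        dsimp only <;> by_cases h : NNN.InC G i j
    · rw [hμpos _ _ j h, hμpos _ _ j h]
    · rw [hμneg _ _ j h, hμneg _ _ j h]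
    · rw [hμpos _ _ j h, hμpos _ _ j h]
    · rw [hμneg _ _ j h, hμneg _ _ j h]
  -- key exchange identity
  have key : marg (insert i A) x * marg B x = marg (insert i B) x * marg A x := by
    have pair : ∀ f g : (∀ k, X k) → ℝ,
        (∑ y, f y) * (∑ z, g z) = ∑ p : (∀ k, X k) × (∀ k, X k), f p.1 * g p.2 := by
      intro f g
      rw [Fintype.sum_prod_type]
      exact Finset.sum_mul_sum _ _ _ _
    rw [hmarg, hmarg, hmarg, hmarg, pair, pair]
    refine Fintype.sum_bijective φ hinv.bijective _ _ ?_
    rintro ⟨y, z⟩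
    simp only [hφ]
    by_cases h12 : (∀ j ∈ insert i A, y j = x j) ∧ (∀ j ∈ B, z j = x j)
    · obtain ⟨h1, h2⟩ := h12
      have hyz : ∀ j ∈ B, y j = z j := by
        intro j hj
        rw [h1 j (Finset.mem_insert_of_mem (hBA hj)), h2 j hj]
      have hc1 : ∀ j ∈ insert i B, μ y z j = x j := by
        intro j hj
        rcases Finset.mem_insert.mp hj with rfl | hj
        · rw [hμpos y z j hiC]; exact h1 j (Finset.mem_insert_self _ _)
        · rw [hμneg y z j (hnotC j ((hBmem j).mp hj).1)]; exact h2 j hj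
      have hc2 : ∀ j ∈ A, μ z y j = x j := by
        intro j hj
        rw [hμneg z y j (hnotC j ((hAmem j).mp hj))]
        exact h1 j (Finset.mem_insert_of_mem hj)
      rw [if_pos h1, if_pos h2, if_pos hc1, if_pos hc2, hP, hP, hP, hP,
        div_mul_div_comm, div_mul_div_comm, hWswap y z hyz]
    · -- the image conditions also fail
      have himg : ¬ ((∀ j ∈ insert i B, μ y z j = x j) ∧ (∀ j ∈ A, μ z y j = x j)) := by
        rintro ⟨h1', h2'⟩
        refine h12 ⟨?_, ?_⟩
        · intro j hj
          rcases Finset.mem_insert.mp hj with rfl | hj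
          · rw [← hμpos y z j hiC]; exact h1' j (Finset.mem_insert_self _ _)
          · rw [← hμneg z y j (hnotC j ((hAmem j).mp hj))]; exact h2' j hj
        · intro j hj
          rw [← hμneg y z j (hnotC j ((hBmem j).mp hj).1)]
          exact h1' j (Finset.mem_insert_of_mem hj)
      have hzero1 : (if ∀ j ∈ insert i A, y j = x j then P y else 0) *
          (if ∀ j ∈ B, z j = x j then P z else 0) = 0 := by
        rcases not_and_or.mp h12 with h | h
        · rw [if_neg h, zero_mul]
        · rw [if_neg h, mul_zero]
      have hzero2 : (if ∀ j ∈ insert i B, μ y z j = x j then P (μ y z) else 0) *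
          (if ∀ j ∈ A, μ z y j = x j then P (μ z y) else 0) = 0 := by
        rcases not_and_or.mp himg with h | h
        · rw [if_neg h, zero_mul]
        · rw [if_neg h, mul_zero]
      rw [hzero1, hzero2]
  rw [div_eq_div_iff (ne_of_gt hpos) (ne_of_gt hBpos)]
  exact key
end
end
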